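/- Let U_L be the uniform distribution on {1,...,L} and Q a probability distribution on a finite set. Then the maximum fidelity over majorization conversions from U_L to Q equals √(Σ_{i=1}^{L} Q↓(i)), i.e., max{ F(P', Q) : U_L ≺ P' } = √(Σ_{i=1}^L Q↓(i)), where Q↓ are the values of Q sorted in decreasing order. -/

import Mathlib

/-- The sum of the `l` largest values of `P` (i.e. `∑_{i=1}^{l} P↓(i)` for a nonnegative `P`). -/
noncomputable def maxSum {α : Type*} [Fintype α] (P : α → ℝ) (l : ℕ) : ℝ :=
  (Finset.univ.powerset.filter (fun s => s.card ≤ l)).sup'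
    ⟨∅, by simp⟩ (fun s => ∑ x ∈ s, P x)

/-- `P ≺ Q` : `P` is majorized by `Q`. -/
def Majorized {α β : Type*} [Fintype α] [Fintype β] (P : α → ℝ) (Q : β → ℝ) : Prop :=
  ∀ l : ℕ, maxSum P l ≤ maxSum Q l

lemma le_maxSum {α : Type*} [Fintype α] (P : α → ℝ) {l : ℕ} {s : Finset α}
    (hs : s.card ≤ l) : ∑ x ∈ s, P x ≤ maxSum P l :=
  Finset.le_sup' (f := fun s => ∑ x ∈ s, P x)
    (by simp [Finset.mem_filter, hs])

lemma maxSum_le {α : Type*} [Fintype α] (P : α → ℝ) {l : ℕ} {c : ℝ}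
    (h : ∀ s : Finset α, s.card ≤ l → ∑ x ∈ s, P x ≤ c) : maxSum P l ≤ c :=
  Finset.sup'_le _ _ (fun s hs => h s (by simpa using (Finset.mem_filter.mp hs).2))

lemma exists_maxSum_eq {α : Type*} [Fintype α] (P : α → ℝ) (l : ℕ) :
    ∃ s : Finset α, s.card ≤ l ∧ maxSum P l = ∑ x ∈ s, P x := by
  obtain ⟨s, hs, h⟩ := Finset.exists_mem_eq_sup'
    (⟨∅, by simp⟩ : ((Finset.univ.powerset.filter
      (fun s : Finset α => s.card ≤ l))).Nonempty) (fun s => ∑ x ∈ s, P x)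
  exact ⟨s, by simpa using (Finset.mem_filter.mp hs).2, h⟩

/-- The top `l` elements of `S` carry at least an `l/|S|` fraction of the total mass. -/
lemma top_subset_sum {β : Type*} [DecidableEq β] (f : β → ℝ) (_hf : ∀ x, 0 ≤ f x) :
    ∀ (S : Finset β) (l : ℕ), l ≤ S.card →
      ∃ T ⊆ S, T.card = l ∧ (l : ℝ) * ∑ x ∈ S, f x ≤ (S.card : ℝ) * ∑ x ∈ T, f x := by
  intro S
  induction S using Finset.strongInduction with
  | _ S ih =>
    intro l hl
    rcases eq_or_lt_of_le hl with heq | hlt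
    · exact ⟨S, Finset.Subset.refl S, heq.symm, by rw [heq]⟩
    · have hne : S.Nonempty := Finset.card_pos.mp (lt_of_le_of_lt (Nat.zero_le l) hlt)
      obtain ⟨m, hm, hmin⟩ := S.exists_min_image f hne
      have hS'card : (S.erase m).card = S.card - 1 := Finset.card_erase_of_mem hm
      have hl' : l ≤ (S.erase m).card := by omega
      obtain ⟨T, hTS', hTcard, hT⟩ := ih (S.erase m) (Finset.erase_ssubset hm) l hl'
      refine ⟨T, hTS'.trans (Finset.erase_subset _ _), hTcard, ?_⟩
      have hsum : ∑ x ∈ S, f x = f m + ∑ x ∈ S.erase m, f x :=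
        (Finset.add_sum_erase _ _ hm).symm
      have hTm : (l : ℝ) * f m ≤ ∑ x ∈ T, f x := by
        calc (l : ℝ) * f m = ∑ _x ∈ T, f m := by
              rw [Finset.sum_const, hTcard, nsmul_eq_mul]
          _ ≤ ∑ x ∈ T, f x := Finset.sum_le_sum
              (fun x hx => hmin x (Finset.mem_of_mem_erase (hTS' hx)))
      have hScard : (S.card : ℝ) = ((S.erase m).card : ℝ) + 1 := by
        have h1 : 1 ≤ S.card := Finset.card_pos.mpr hne
        rw [hS'card]
        push_cast [Nat.cast_sub h1]
        ring
      rw [hsum, hScard]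
      nlinarith [hT, hTm]

theorem stmt8 {β : Type*} [Fintype β] (L : ℕ) (hL : 0 < L)
    (Q : β → ℝ) (hQ0 : ∀ y, 0 ≤ Q y) (hQ1 : ∑ y, Q y = 1) :
    IsGreatest
      {r | ∃ P' : β → ℝ, (∀ y, 0 ≤ P' y) ∧ (∑ y, P' y = 1) ∧
        Majorized (fun _ : Fin L => (L : ℝ)⁻¹) P' ∧
        r = ∑ y, Real.sqrt (P' y * Q y)}
      (Real.sqrt (maxSum Q L)) := by
  classical
  obtain ⟨S, hScard, hSeq⟩ := exists_maxSum_eq Q L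
  set s : ℝ := maxSum Q L with hs_def
  -- s > 0
  have hy0 : ∃ y, 0 < Q y := by
    by_contra h
    push_neg at h
    have : ∑ y, Q y = 0 := Finset.sum_eq_zero (fun y _ => le_antisymm (h y) (hQ0 y))
    rw [hQ1] at this; norm_num at this
  obtain ⟨y0, hy0⟩ := hy0
  have hspos : 0 < s := by
    have h1 : ∑ x ∈ {y0}, Q x ≤ s := le_maxSum Q (by rw [Finset.card_singleton]; exact hL)
    simpa using lt_of_lt_of_le (by simpa using hy0) h1
  constructor
  · -- membership : P' = Q restricted to S, normalized
    refine ⟨fun y => if y ∈ S then Q y / s else 0, ?_, ?_, ?_, ?_⟩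
    · intro y
      by_cases h : y ∈ S <;> simp [h, div_nonneg (hQ0 y) hspos.le]
    · rw [Finset.sum_ite_mem, Finset.univ_inter, ← Finset.sum_div, ← hSeq]
      exact div_self hspos.ne'
    · -- Majorization
      intro l
      have hub : maxSum (fun _ : Fin L => (L : ℝ)⁻¹) l ≤ (min l L : ℝ) / L := by
        apply maxSum_le
        intro t ht
        have htL : t.card ≤ L := le_trans (Finset.card_le_univ t) (by simp)
        rw [Finset.sum_const, nsmul_eq_mul, div_eq_mul_inv]
        apply mul_le_mul_of_nonneg_right _ (by positivity)
        exact_mod_cast le_min ht htL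
      refine le_trans hub ?_
      have hLpos : (0 : ℝ) < L := by exact_mod_cast hL
      by_cases hcase : S.card ≤ l
      · -- take T = S : full mass 1
        have h1 : ∑ x ∈ S, (if x ∈ S then Q x / s else 0) = 1 := by
          rw [Finset.sum_ite_of_true (fun x hx => hx), ← Finset.sum_div, ← hSeq]
          exact div_self hspos.ne'
        have h2 : (1 : ℝ) ≤ maxSum (fun y => if y ∈ S then Q y / s else 0) l := by
          calc (1 : ℝ) = ∑ x ∈ S, (if x ∈ S then Q x / s else 0) := h1.symm
            _ ≤ _ := le_maxSum _ hcase
        refine le_trans ?_ h2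
        rw [div_le_one hLpos]
        exact min_le_right _ _
      · push_neg at hcase
        obtain ⟨T, hTS, hTcard, hT⟩ := top_subset_sum Q hQ0 S l hcase.le
        have hlL : (l : ℝ) ≤ (L : ℝ) := by
          exact_mod_cast le_trans hcase.le hScard
        have hTnn : 0 ≤ ∑ x ∈ T, Q x := Finset.sum_nonneg (fun x _ => hQ0 x)
        have hSL : (S.card : ℝ) ≤ (L : ℝ) := by exact_mod_cast hScard
        have hkey : (l : ℝ) * s ≤ (L : ℝ) * ∑ x ∈ T, Q x := by
          rw [hSeq]
          exact le_trans hT (mul_le_mul_of_nonneg_right hSL hTnn)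
        refine le_trans ?_ (le_maxSum (fun y => if y ∈ S then Q y / s else 0)
          (le_of_eq hTcard))
        show min (l : ℝ) (L : ℝ) / L ≤ ∑ x ∈ T, (if x ∈ S then Q x / s else 0)
        rw [Finset.sum_ite_of_true (fun x hx => hTS hx), ← Finset.sum_div,
          min_eq_left hlL, div_le_div_iff₀ hLpos hspos]
        linarith [hkey]
    · -- fidelity value
      have hterm : ∀ y, Real.sqrt ((if y ∈ S then Q y / s else 0) * Q y)
          = (if y ∈ S then Q y / Real.sqrt s else 0) := by
        intro y
        by_cases h : y ∈ S
        · rw [if_pos h, if_pos h, div_mul_eq_mul_div, ← sq,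
            Real.sqrt_div (sq_nonneg _), Real.sqrt_sq (hQ0 y)]
        · simp [h]
      symm
      calc ∑ y, Real.sqrt ((if y ∈ S then Q y / s else 0) * Q y)
          = ∑ y, (if y ∈ S then Q y / Real.sqrt s else 0) :=
            Finset.sum_congr rfl (fun y _ => hterm y)
        _ = (∑ y ∈ S, Q y) / Real.sqrt s := by
            rw [Finset.sum_ite_mem, Finset.univ_inter, Finset.sum_div]
        _ = Real.sqrt s := by rw [← hSeq, Real.div_sqrt]
  · -- upper bound
    rintro r ⟨P', hP0, hP1, hmaj, rfl⟩
    obtain ⟨S', hS'card, hS'eq⟩ := exists_maxSum_eq P' L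
    have h1 : (1 : ℝ) ≤ maxSum P' L := by
      refine le_trans ?_ (hmaj L)
      have : ∑ _x : Fin L, (L : ℝ)⁻¹ ≤ maxSum (fun _ : Fin L => (L : ℝ)⁻¹) L :=
        le_maxSum _ (by simp)
      refine le_trans ?_ this
      rw [Finset.sum_const, nsmul_eq_mul]
      simp [Finset.card_univ, mul_inv_cancel₀ (by exact_mod_cast hL.ne' : (L:ℝ) ≠ 0)]
    have hle : ∑ x ∈ S', P' x ≤ 1 := by
      rw [← hP1]
      exact Finset.sum_le_sum_of_subset_of_nonneg (Finset.subset_univ S')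
        (fun y _ _ => hP0 y)
    have hSsum : ∑ x ∈ S', P' x = 1 := le_antisymm hle (by rw [← hS'eq]; exact h1)
    have hzero : ∀ y ∉ S', P' y = 0 := by
      intro y hy
      by_contra hne
      have hpos : 0 < P' y := lt_of_le_of_ne (hP0 y) (Ne.symm hne)
      have : ∑ x ∈ insert y S', P' x ≤ 1 := by
        rw [← hP1]
        exact Finset.sum_le_sum_of_subset_of_nonneg (Finset.subset_univ _)
          (fun z _ _ => hP0 z)
      rw [Finset.sum_insert hy, hSsum] at this
      linarith
    have hrw : ∑ y, Real.sqrt (P' y * Q y) = ∑ y ∈ S', Real.sqrt (P' y * Q y) := by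
      symm
      apply Finset.sum_subset (Finset.subset_univ S')
      intro y _ hy
      simp [hzero y hy]
    rw [hrw]
    have hCS : (∑ y ∈ S', Real.sqrt (P' y * Q y)) ^ 2 ≤
        (∑ y ∈ S', P' y) * ∑ y ∈ S', Q y := by
      have := Finset.sum_mul_sq_le_sq_mul_sq S' (fun y => Real.sqrt (P' y))
        (fun y => Real.sqrt (Q y))
      simp only [Real.sq_sqrt (hP0 _), Real.sq_sqrt (hQ0 _),
        ← Real.sqrt_mul (hP0 _)] at this
      exact this
    have hQS : ∑ y ∈ S', Q y ≤ s := by rw [hs_def]; exact le_maxSum Q hS'card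
    have hnn : 0 ≤ ∑ y ∈ S', Real.sqrt (P' y * Q y) :=
      Finset.sum_nonneg (fun y _ => Real.sqrt_nonneg _)
    rw [← Real.sqrt_sq hnn]
    apply Real.sqrt_le_sqrt
    calc (∑ y ∈ S', Real.sqrt (P' y * Q y)) ^ 2
        ≤ (∑ y ∈ S', P' y) * ∑ y ∈ S', Q y := hCS
      _ ≤ s := by rw [hSsum, one_mul]; exact hQS
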